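/- arXiv:2508.04445 — 2 statements merged into one kernel-verified Lean document; each statement's English description precedes it below -/
import Mathlib

section
/- For all positive integers r and k, the graph G_{r,k} (defined recursively by: G_{r,1} is a single vertex, G_{1,k} = K_k, and G_{r,k} obtained from G_{r-1,k} by attaching to each vertex a fully-joined disjoint copy of G_{r,k-1}) contains no induced path on 2r+1 vertices. -/
open Classical

variable {V : Type}

/-- Reachability within a vertex subset `s` of the graph `G`. -/
def ReachIn (G : SimpleGraph V) (s : Finset V) (u v : V) : Prop :=
  Relation.ReflTransGen (fun a b => a ∈ s ∧ b ∈ s ∧ G.Adj a b) u v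

/-- The induced subgraph of `G` on `s` is (nonempty and) connected. -/
def ConnIn (G : SimpleGraph V) (s : Finset V) : Prop :=
  s.Nonempty ∧ ∀ u ∈ s, ∀ v ∈ s, ReachIn G s u v

/-- The vertex set of the connected component of `v` in the induced subgraph on `s`. -/
noncomputable def compIn (G : SimpleGraph V) (s : Finset V) (v : V) : Finset V :=
  s.filter (fun u => ReachIn G s v u)

/-- Fuel-based recursion computing the treedepth of the induced subgraph of `G` on `s`
(correct whenever the fuel is at least `s.card`): treedepth of the null graph is `0`;
for a connected graph it is `1 + min_v td(G - v)`; otherwise the max over components. -/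
noncomputable def tdAux (G : SimpleGraph V) : ℕ → Finset V → ℕ
  | 0, _ => 0
  | n+1, s =>
    if hs : s = ∅ then 0
    else if ConnIn G s then
      1 + s.inf' (Finset.nonempty_of_ne_empty hs) (fun v => tdAux G n (s.erase v))
    else
      s.sup (fun v => tdAux G n (compIn G s v))

/-- The treedepth of the induced subgraph of `G` on the vertex set `s`. -/
noncomputable def tdOn (G : SimpleGraph V) (s : Finset V) : ℕ := tdAux G s.card s

/-- The treedepth of a finite graph. -/
noncomputable def td (G : SimpleGraph V) [Fintype V] : ℕ := tdOn G Finset.univ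

/-- `G` contains a path on `m` vertices as a subgraph. -/
def HasPathOn (G : SimpleGraph V) (m : ℕ) : Prop :=
  ∃ p : Fin m → V, Function.Injective p ∧
    ∀ i : Fin m, ∀ h : i.1 + 1 < m, G.Adj (p i) (p ⟨i.1 + 1, h⟩)

/-- `G` contains an induced path on `m` vertices: `m` distinct vertices with
adjacency exactly between consecutive ones. -/
def HasInducedPathOn (G : SimpleGraph V) (m : ℕ) : Prop :=
  ∃ p : Fin m → V, Function.Injective p ∧
    ∀ i j : Fin m, G.Adj (p i) (p j) ↔ (i.1 + 1 = j.1 ∨ j.1 + 1 = i.1)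

/-- `G` is `P_t`-free: it has no induced path on `t` vertices. -/
def PtFree (G : SimpleGraph V) (t : ℕ) : Prop := ¬ HasInducedPathOn G t

/-- The graph of type `a(H, H')`: obtained from `H` by adding, for each vertex
`a` of `H`, a disjoint copy `{a} × B` of `H'` fully joined to `a`. -/
def typeA {A B : Type} (H : SimpleGraph A) (H' : SimpleGraph B) :
    SimpleGraph (A ⊕ A × B) where
  Adj x y := match x, y with
    | Sum.inl a, Sum.inl a' => H.Adj a a'
    | Sum.inl a, Sum.inr p => a = p.1
    | Sum.inr p, Sum.inl a => p.1 = a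
    | Sum.inr p, Sum.inr q => p.1 = q.1 ∧ H'.Adj p.2 q.2
  symm := by
    constructor
    rintro (a|p) (a'|q) h
    · exact H.adj_symm h
    · exact h.symm
    · exact h.symm
    · exact ⟨h.1.symm, H'.adj_symm h.2⟩
  loopless := by
    constructor
    rintro (a|p) h
    · exact H.irrefl h
    · exact H'.irrefl h.2

/-- One row-step of the recursive construction: given the previous family
`prev k = G_{r, k+1}`, builds `G_{r+1, k+1}` for all `k` (index shifted by one:
`GrkRow prev 0` is the one-vertex graph `G_{r+1, 1}`, and `GrkRow prev (k+1)`
is obtained from `prev (k+1) = G_{r, k+2}` by attaching to each of its vertices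
a fully-joined disjoint copy of `GrkRow prev k = G_{r+1, k+1}`). -/
def GrkRow (prev : ℕ → (W : Type) × SimpleGraph W) : ℕ → (W : Type) × SimpleGraph W
  | 0 => ⟨PUnit, ⊥⟩
  | k+1 => ⟨(prev (k+1)).1 ⊕ ((prev (k+1)).1 × (GrkRow prev k).1),
      typeA (prev (k+1)).2 (GrkRow prev k).2⟩

/-- The graph `G_{r+1, k+1}` (indices shifted by one): `GrkS 0 k` is the complete
graph `K_{k+1}`, `GrkS (r+1) 0` is a single vertex, and `GrkS (r+1) (k+1)` is
obtained from `GrkS r (k+1)` by attaching to each vertex a fully-joined disjoint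
copy of `GrkS (r+1) k`. -/
def GrkS : ℕ → ℕ → (W : Type) × SimpleGraph W
  | 0 => fun k => ⟨Fin (k+1), ⊤⟩
  | r+1 => GrkRow (GrkS r)

noncomputable def fintypeRow (prev : ℕ → (W : Type) × SimpleGraph W)
    (hp : ∀ k, Fintype (prev k).1) : ∀ k, Fintype (GrkRow prev k).1
  | 0 => inferInstanceAs (Fintype PUnit)
  | k+1 =>
    letI := hp (k+1)
    letI := fintypeRow prev hp k
    inferInstanceAs (Fintype (_ ⊕ _ × _))

noncomputable def fintypeGrk : ∀ r k, Fintype (GrkS r k).1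
  | 0 => fun k => inferInstanceAs (Fintype (Fin (k+1)))
  | r+1 => fintypeRow (GrkS r) (fintypeGrk r)

/-- Chain propagation along `0, 1, ..., N-1`. -/
lemma chain_prop (P : ℕ → Prop) {N i : ℕ} (hi : i < N) (hPi : P i)
    (up : ∀ j, j + 1 < N → P j → P (j + 1))
    (down : ∀ j, j + 1 < N → P (j + 1) → P j) :
    ∀ j, j < N → P j := by
  have A : ∀ d j, j + d = i → P j := by
    intro d
    induction d with
    | zero =>
      intro j hj
      have : j = i := by omega
      subst this; exact hPi
    | succ d ih =>
      intro j hj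
      have h1 : (j + 1) + d = i := by omega
      exact down j (by omega) (ih (j + 1) h1)
  have B : ∀ d, i + d < N → P (i + d) := by
    intro d
    induction d with
    | zero => intro _; exact hPi
    | succ d ih =>
      intro h
      exact up (i + d) (by omega) (ih (by omega))
  intro j hj
  rcases le_total j i with h | h
  · exact A (i - j) j (by omega)
  · have hb := B (j - i) (by omega)
    have he : i + (j - i) = j := by omega
    rwa [he] at hb

section TypeA

variable {A B : Type} (H : SimpleGraph A) (H' : SimpleGraph B)

lemma typeA_adj_inl_inl (a a' : A) :
    (typeA H H').Adj (Sum.inl a) (Sum.inl a') ↔ H.Adj a a' := Iff.rfl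

lemma typeA_adj_inl_inr (a : A) (q : A × B) :
    (typeA H H').Adj (Sum.inl a) (Sum.inr q) ↔ a = q.1 := Iff.rfl

lemma typeA_adj_inr_inl (q : A × B) (a : A) :
    (typeA H H').Adj (Sum.inr q) (Sum.inl a) ↔ q.1 = a := Iff.rfl

lemma typeA_adj_inr_inr (q q' : A × B) :
    (typeA H H').Adj (Sum.inr q) (Sum.inr q') ↔ q.1 = q'.1 ∧ H'.Adj q.2 q'.2 := Iff.rfl

lemma typeA_ptFree (n : ℕ) (hH : PtFree H (n + 1)) (hH' : PtFree H' (n + 3)) :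
    PtFree (typeA H H') (n + 3) := by
  rintro ⟨p, hinj, hadj⟩
  by_cases hall : ∀ i : Fin (n + 3), ∃ q : A × B, p i = Sum.inr q
  · -- All vertices of the path lie in copies; they lie in a single copy.
    have h0 : (0 : ℕ) < n + 3 := by omega
    obtain ⟨q0, hq0⟩ := hall ⟨0, h0⟩
    have key : ∀ m, ∀ h : m < n + 3, ∃ b, p ⟨m, h⟩ = Sum.inr (q0.1, b) := by
      intro m
      induction m with
      | zero => intro h; exact ⟨q0.2, hq0⟩
      | succ m ih =>
        intro h
        have hm : m < n + 3 := by omega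
        obtain ⟨b, hb⟩ := ih hm
        obtain ⟨q', hq'⟩ := hall ⟨m + 1, h⟩
        have ha : (typeA H H').Adj (p ⟨m, hm⟩) (p ⟨m + 1, h⟩) :=
          (hadj ⟨m, hm⟩ ⟨m + 1, h⟩).2 (Or.inl rfl)
        rw [hb, hq', typeA_adj_inr_inr] at ha
        have h1 : q0.1 = q'.1 := ha.1
        exact ⟨q'.2, by rw [hq', h1]⟩
    choose qb hqb using fun i : Fin (n + 3) => key i.1 i.2
    refine hH' ⟨qb, ?_, ?_⟩
    · intro i j hij
      apply hinj
      have h1 : p i = Sum.inr (q0.1, qb i) := hqb i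
      have h2 : p j = Sum.inr (q0.1, qb j) := hqb j
      rw [h1, h2, hij]
    · intro i j
      have h1 : p i = Sum.inr (q0.1, qb i) := hqb i
      have h2 : p j = Sum.inr (q0.1, qb j) := hqb j
      have key2 := hadj i j
      rw [h1, h2, typeA_adj_inr_inr] at key2
      constructor
      · intro h; exact key2.mp ⟨rfl, h⟩
      · intro h; exact (key2.mpr h).2
  · push_neg at hall
    obtain ⟨i0, hi0⟩ := hall
    have hi0l : ∃ a, p i0 = Sum.inl a := by
      cases h : p i0 with
      | inl a => exact ⟨a, rfl⟩
      | inr q => exact absurd h (hi0 q)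
    obtain ⟨a0, ha0⟩ := hi0l
    -- Every copy vertex on the path has its anchor on the path.
    have anchor_on : ∀ (i : Fin (n + 3)) (q : A × B), p i = Sum.inr q →
        ∃ j, p j = Sum.inl q.1 := by
      intro i q hi
      by_contra hna
      push_neg at hna
      have key := chain_prop
        (fun m => ∀ h : m < n + 3, ∃ b, p ⟨m, h⟩ = Sum.inr (q.1, b))
        i.2 (fun h => ⟨q.2, hi⟩) ?up ?down i0.1 i0.2
      case up =>
        intro j hj hP hj1
        have hjlt : j < n + 3 := by omega
        obtain ⟨b, hb⟩ := hP hjlt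
        have ha : (typeA H H').Adj (p ⟨j, hjlt⟩) (p ⟨j + 1, hj1⟩) :=
          (hadj ⟨j, hjlt⟩ ⟨j + 1, hj1⟩).2 (Or.inl rfl)
        cases hc : p ⟨j + 1, hj1⟩ with
        | inl a' =>
          rw [hb, hc, typeA_adj_inr_inl] at ha
          have h1 : q.1 = a' := ha
          exact absurd (show p ⟨j + 1, hj1⟩ = Sum.inl q.1 by rw [hc, h1]) (hna _)
        | inr q' =>
          obtain ⟨qa', qb'⟩ := q'
          rw [hb, hc, typeA_adj_inr_inr] at ha
          have h1 : q.1 = qa' := ha.1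
          exact ⟨qb', by rw [h1]⟩
      case down =>
        intro j hj hP
        intro hjlt
        have hj1 : j + 1 < n + 3 := hj
        obtain ⟨b, hb⟩ := hP hj1
        have ha : (typeA H H').Adj (p ⟨j, hjlt⟩) (p ⟨j + 1, hj1⟩) :=
          (hadj ⟨j, hjlt⟩ ⟨j + 1, hj1⟩).2 (Or.inl rfl)
        cases hc : p ⟨j, hjlt⟩ with
        | inl a' =>
          rw [hb, hc, typeA_adj_inl_inr] at ha
          have h1 : a' = q.1 := ha
          exact absurd (show p ⟨j, hjlt⟩ = Sum.inl q.1 by rw [hc, h1]) (hna _)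
        | inr q' =>
          obtain ⟨qa', qb'⟩ := q'
          rw [hb, hc, typeA_adj_inr_inr] at ha
          have h1 : qa' = q.1 := ha.1
          exact ⟨qb', by rw [h1]⟩
      obtain ⟨b, hb⟩ := key i0.2
      exact hi0 (q.1, b) hb
    -- Copy vertices occur only at the two ends of the path.
    have ends : ∀ (i : Fin (n + 3)) (q : A × B), p i = Sum.inr q →
        i.1 = 0 ∨ i.1 = n + 2 := by
      intro i q hi
      by_contra hend
      push_neg at hend
      obtain ⟨hend0, hend2⟩ := hend
      have hpos : 0 < i.1 := Nat.pos_of_ne_zero hend0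
      have hlt : i.1 < n + 2 := lt_of_le_of_ne (by omega) hend2
      obtain ⟨j, hj⟩ := anchor_on i q hi
      have haij : (typeA H H').Adj (p i) (p j) := by
        rw [hi, hj, typeA_adj_inr_inl]
      rcases (hadj i j).1 haij with hc | hc
      · -- j = i + 1, consider i' = i - 1
        have hi'lt : i.1 - 1 < n + 3 := by omega
        set i' : Fin (n + 3) := ⟨i.1 - 1, hi'lt⟩ with hi'def
        have ha' : (typeA H H').Adj (p i') (p i) :=
          (hadj i' i).2 (Or.inl (show i.1 - 1 + 1 = i.1 by omega))
        cases hc' : p i' with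
        | inl a' =>
          rw [hc', hi, typeA_adj_inl_inr] at ha'
          have h1 : a' = q.1 := ha'
          have h2 : p i' = p j := by rw [hc', hj, h1]
          have h3 : i'.1 = j.1 := by rw [hinj h2]
          have h4 : i.1 - 1 = j.1 := h3
          omega
        | inr q' =>
          obtain ⟨qa', qb'⟩ := q'
          rw [hc', hi, typeA_adj_inr_inr] at ha'
          have hqa : qa' = q.1 := ha'.1
          have ha'' : (typeA H H').Adj (p i') (p j) := by
            rw [hc', hj, typeA_adj_inr_inl]; exact hqa
          rcases (hadj i' j).1 ha'' with hc2 | hc2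
          · have h5 : i.1 - 1 + 1 = j.1 := hc2; omega
          · have h5 : j.1 + 1 = i.1 - 1 := hc2; omega
      · -- j = i - 1, consider i' = i + 1
        have hi'lt : i.1 + 1 < n + 3 := by omega
        set i' : Fin (n + 3) := ⟨i.1 + 1, hi'lt⟩ with hi'def
        have ha' : (typeA H H').Adj (p i) (p i') :=
          (hadj i i').2 (Or.inl rfl)
        cases hc' : p i' with
        | inl a' =>
          rw [hi, hc', typeA_adj_inr_inl] at ha'
          have h1 : q.1 = a' := ha'
          have h2 : p i' = p j := by rw [hc', hj, h1]
          have h3 : i'.1 = j.1 := by rw [hinj h2]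
          have h4 : i.1 + 1 = j.1 := h3
          omega
        | inr q' =>
          obtain ⟨qa', qb'⟩ := q'
          rw [hi, hc', typeA_adj_inr_inr] at ha'
          have hqa : q.1 = qa' := ha'.1
          have ha'' : (typeA H H').Adj (p i') (p j) := by
            rw [hc', hj, typeA_adj_inr_inl]; exact hqa.symm
          rcases (hadj i' j).1 ha'' with hc2 | hc2
          · have h5 : i.1 + 1 + 1 = j.1 := hc2; omega
          · have h5 : j.1 + 1 = i.1 + 1 := hc2; omega
    -- The middle n+1 vertices are base vertices forming an induced path in H.
    have hltm : ∀ i : Fin (n + 1), i.1 + 1 < n + 3 := fun i => by omega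
    have hmid : ∀ i : Fin (n + 1), ∃ a, p ⟨i.1 + 1, hltm i⟩ = Sum.inl a := by
      intro i
      cases hc : p ⟨i.1 + 1, hltm i⟩ with
      | inl a => exact ⟨a, rfl⟩
      | inr q =>
        have h1 := ends ⟨i.1 + 1, hltm i⟩ q hc
        have h2 : i.1 + 1 = 0 ∨ i.1 + 1 = n + 2 := h1
        have h3 := i.2
        omega
    choose qa hqa using hmid
    refine hH ⟨qa, ?_, ?_⟩
    · intro i j hij
      have h2 : p ⟨i.1 + 1, hltm i⟩ = p ⟨j.1 + 1, hltm j⟩ := by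
        rw [hqa i, hqa j, hij]
      have h3 := hinj h2
      have h4 : i.1 + 1 = j.1 + 1 := congrArg Fin.val h3
      exact Fin.ext (by omega)
    · intro i j
      have key := hadj ⟨i.1 + 1, hltm i⟩ ⟨j.1 + 1, hltm j⟩
      rw [hqa i, hqa j, typeA_adj_inl_inl] at key
      have key2 : H.Adj (qa i) (qa j) ↔
          (i.1 + 1 + 1 = j.1 + 1 ∨ j.1 + 1 + 1 = i.1 + 1) := key
      rw [key2]
      constructor
      · rintro (h | h)
        · exact Or.inl (by omega)
        · exact Or.inr (by omega)
      · rintro (h | h)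
        · exact Or.inl (by omega)
        · exact Or.inr (by omega)

end TypeA

/-- `G_{r,k}` is `P_{2r+1}`-free for all `r, k ≥ 1`; here `GrkS r k` is
`G_{r+1, k+1}`, so it has no induced path on `2(r+1)+1` vertices. -/
theorem Grk_ptFree (r k : ℕ) : PtFree (GrkS r k).2 (2 * (r + 1) + 1) := by
  induction r generalizing k with
  | zero =>
    rintro ⟨p, hinj, hadj⟩
    have h0 : (0 : ℕ) < 2 * (0 + 1) + 1 := by omega
    have h2 : (2 : ℕ) < 2 * (0 + 1) + 1 := by omega
    have hne : p ⟨0, h0⟩ ≠ p ⟨2, h2⟩ := by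
      intro h
      have hval : (0 : ℕ) = 2 := congrArg Fin.val (hinj h)
      omega
    have hadj02 : (GrkS 0 k).2.Adj (p ⟨0, h0⟩) (p ⟨2, h2⟩) := hne
    have h3 : (0 : ℕ) + 1 = 2 ∨ 2 + 1 = 0 := (hadj ⟨0, h0⟩ ⟨2, h2⟩).1 hadj02
    omega
  | succ r ih =>
    induction k with
    | zero =>
      rintro ⟨p, hinj, hadj⟩
      have h0 : (0 : ℕ) < 2 * (r + 1 + 1) + 1 := by omega
      have h1 : (1 : ℕ) < 2 * (r + 1 + 1) + 1 := by omega
      have h01 : (GrkS (r + 1) 0).2.Adj (p ⟨0, h0⟩) (p ⟨1, h1⟩) :=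
        (hadj ⟨0, h0⟩ ⟨1, h1⟩).2 (Or.inl rfl)
      exact h01
    | succ k ihk =>
      have hA : PtFree (GrkS r (k + 1)).2 (2 * r + 2 + 1) := ih (k + 1)
      have hB : PtFree (GrkS (r + 1) k).2 (2 * r + 2 + 3) := ihk
      exact typeA_ptFree (GrkS r (k + 1)).2 (GrkS (r + 1) k).2 (2 * r + 2) hA hB
end

section
/- For all positive integers k and n, every graph G with 2-treedepth at most k that contains a path on n vertices as a subgraph contains an induced path on at least n^{1/(k-1)}/2 vertices (where for k = 1 the statement holds trivially since such G is edgeless). -/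
open Classical

variable {V : Type}

/-- `B` induces a block-like graph: connected and with no cut vertex
(removing any vertex leaves it connected, when nonempty). -/
def IsBlockSet (G : SimpleGraph V) (B : Finset V) : Prop :=
  ConnIn G B ∧ ∀ v ∈ B, (B.erase v).Nonempty → ConnIn G (B.erase v)

/-- `B` is a block of the induced subgraph of `G` on `s`: a maximal connected
subgraph without a cut vertex. -/
def IsBlock (G : SimpleGraph V) (s B : Finset V) : Prop :=
  B ⊆ s ∧ IsBlockSet G B ∧ ∀ B' : Finset V, B ⊆ B' → B' ⊆ s → IsBlockSet G B' → B' = B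

/-- Fuel-based recursion computing the 2-treedepth of the induced subgraph of `G` on `s`
(correct whenever the fuel is at least `s.card`): `0` for the null graph;
`1 + min_v td₂(G - v)` if the graph is a block; the max over blocks otherwise. -/
noncomputable def td2Aux (G : SimpleGraph V) : ℕ → Finset V → ℕ
  | 0, _ => 0
  | n+1, s =>
    if hs : s = ∅ then 0
    else if IsBlockSet G s then
      1 + s.inf' (Finset.nonempty_of_ne_empty hs) (fun v => td2Aux G n (s.erase v))
    else
      (s.powerset.filter (fun B => IsBlock G s B)).sup (fun B => td2Aux G n B)

/-- The 2-treedepth of the induced subgraph of `G` on `s`. -/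
noncomputable def td2On (G : SimpleGraph V) (s : Finset V) : ℕ := td2Aux G s.card s

/-- The 2-treedepth of a finite graph. -/
noncomputable def td2 (G : SimpleGraph V) [Fintype V] : ℕ := td2On G Finset.univ

section Basics
variable {V : Type} {G : SimpleGraph V}

lemma reachIn_mono {s t : Finset V} (hst : s ⊆ t) {u v : V} (h : ReachIn G s u v) :
    ReachIn G t u v :=
  Relation.ReflTransGen.mono (r := fun a b => a ∈ s ∧ b ∈ s ∧ G.Adj a b)
    (p := fun a b => a ∈ t ∧ b ∈ t ∧ G.Adj a b) (fun a b hab => ⟨hst hab.1, hst hab.2.1, hab.2.2⟩) _ _ h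

lemma reachIn_trans {s : Finset V} {u v w : V} (h1 : ReachIn G s u v) (h2 : ReachIn G s v w) :
    ReachIn G s u w := Relation.ReflTransGen.trans h1 h2

lemma reachIn_symm {s : Finset V} {u v : V} (h : ReachIn G s u v) : ReachIn G s v u :=
  (@Relation.ReflTransGen.symmetric _ _ ⟨fun a b hab => ⟨hab.2.1, hab.1, hab.2.2.symm⟩⟩).symm _ _ h

lemma reachIn_mem {s : Finset V} {u v : V} (h : ReachIn G s u v) (hu : u ∈ s) : v ∈ s := by
  induction h with
  | refl => exact hu
  | tail _ hst _ => exact hst.2.1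

lemma connIn_of_anchor {s : Finset V} {x₀ : V} (hx : x₀ ∈ s)
    (h : ∀ x ∈ s, ReachIn G s x₀ x) : ConnIn G s :=
  ⟨⟨x₀, hx⟩, fun u hu v hv => reachIn_trans (reachIn_symm (h u hu)) (h v hv)⟩

lemma connIn_subsingleton {s : Finset V} {x₀ : V} (hx : x₀ ∈ s)
    (h : ∀ x ∈ s, x = x₀) : ConnIn G s :=
  connIn_of_anchor hx (fun x hxs => by rw [h x hxs]; exact Relation.ReflTransGen.refl)

lemma connIn_singleton (G : SimpleGraph V) (v : V) : ConnIn G {v} :=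
  connIn_subsingleton (Finset.mem_singleton_self v) (fun x hx => Finset.mem_singleton.mp hx)

lemma connIn_pair {a b : V} (h : G.Adj a b) : ConnIn G {a, b} := by
  apply connIn_of_anchor (s := ({a, b} : Finset V)) (x₀ := a) (by simp)
  intro x hx
  rcases Finset.mem_insert.mp hx with rfl | hx
  · exact Relation.ReflTransGen.refl
  · rw [Finset.mem_singleton] at hx; subst hx
    exact Relation.ReflTransGen.single ⟨by simp, by simp, h⟩

lemma blockSet_singleton (G : SimpleGraph V) (v : V) : IsBlockSet G {v} := by
  refine ⟨connIn_singleton G v, ?_⟩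
  intro w hw hne
  rw [Finset.mem_singleton] at hw; subst hw
  simp [Finset.erase_singleton] at hne

lemma blockSet_pair {a b : V} (h : G.Adj a b) : IsBlockSet G {a, b} := by
  refine ⟨connIn_pair h, ?_⟩
  intro v hv hne
  obtain ⟨w, hw⟩ := hne
  refine connIn_subsingleton hw (fun x hx => ?_)
  have hx1 := Finset.mem_of_mem_erase hx
  have hx2 := Finset.ne_of_mem_erase hx
  have hw1 := Finset.mem_of_mem_erase hw
  have hw2 := Finset.ne_of_mem_erase hw
  simp only [Finset.mem_insert, Finset.mem_singleton] at hx1 hw1 hv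
  rcases hv with rfl | rfl <;> rcases hx1 with rfl | rfl <;> rcases hw1 with rfl | rfl <;>
    first | rfl | (exfalso; exact hx2 rfl) | (exfalso; exact hw2 rfl)

lemma connIn_union {s t : Finset V} (hs : ConnIn G s) (ht : ConnIn G t) {x₀ : V}
    (hxs : x₀ ∈ s) (hxt : x₀ ∈ t) : ConnIn G (s ∪ t) := by
  apply connIn_of_anchor (Finset.mem_union_left t hxs)
  intro x hx
  rcases Finset.mem_union.mp hx with hx | hx
  · exact reachIn_mono Finset.subset_union_left (hs.2 x₀ hxs x hx)
  · exact reachIn_mono Finset.subset_union_right (ht.2 x₀ hxt x hx)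

lemma connIn_exists_adj {s : Finset V} (hc : ConnIn G s) {a b : V} (ha : a ∈ s) (hb : b ∈ s)
    (hab : a ≠ b) : ∃ x ∈ s, ∃ y ∈ s, G.Adj x y := by
  have h := hc.2 a ha b hb
  rcases Relation.ReflTransGen.cases_head h with rfl | ⟨c, hc1, _⟩
  · exact absurd rfl hab
  · exact ⟨a, hc1.1, c, hc1.2.1, hc1.2.2⟩

lemma blockSet_union {B C : Finset V} (hB : IsBlockSet G B) (hC : IsBlockSet G C)
    (h2 : 2 ≤ (B ∩ C).card) : IsBlockSet G (B ∪ C) := by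
  obtain ⟨x₀, hx₀⟩ : (B ∩ C).Nonempty := Finset.card_pos.mp (by omega)
  constructor
  · exact connIn_union hB.1 hC.1 (Finset.mem_inter.mp hx₀).1 (Finset.mem_inter.mp hx₀).2
  · intro v hv hne
    have hcard : 1 ≤ ((B ∩ C).erase v).card := by
      have := Finset.pred_card_le_card_erase (a := v) (s := B ∩ C)
      omega
    obtain ⟨w, hw⟩ : ((B ∩ C).erase v).Nonempty := Finset.card_pos.mp (by omega)
    have hwv : w ≠ v := Finset.ne_of_mem_erase hw
    have hwB : w ∈ B := (Finset.mem_inter.mp (Finset.mem_of_mem_erase hw)).1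
    have hwC : w ∈ C := (Finset.mem_inter.mp (Finset.mem_of_mem_erase hw)).2
    rw [Finset.erase_union_distrib]
    have key : ∀ D : Finset V, IsBlockSet G D → w ∈ D → ∀ x ∈ D.erase v,
        ReachIn G (D.erase v) w x := by
      intro D hD hwD x hx
      by_cases hvD : v ∈ D
      · exact (hD.2 v hvD ⟨x, hx⟩).2 w (Finset.mem_erase.mpr ⟨hwv, hwD⟩) x hx
      · rw [Finset.erase_eq_of_notMem hvD] at hx ⊢
        exact hD.1.2 w hwD x hx
    apply connIn_of_anchor (x₀ := w)
      (Finset.mem_union_left _ (Finset.mem_erase.mpr ⟨hwv, hwB⟩))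
    intro x hx
    rcases Finset.mem_union.mp hx with hx | hx
    · exact reachIn_mono Finset.subset_union_left (key B hB hwB x hx)
    · exact reachIn_mono Finset.subset_union_right (key C hC hwC x hx)

lemma reachIn_along {pp : ℕ → V} {n : ℕ} (hadj : ∀ i, i + 1 < n → G.Adj (pp i) (pp (i + 1)))
    {s : Finset V} {i j : ℕ} (hij : i ≤ j) (hj : j < n)
    (hmem : ∀ l, i ≤ l → l ≤ j → pp l ∈ s) : ReachIn G s (pp i) (pp j) := by
  revert hj hmem
  induction j, hij using Nat.le_induction with
  | base => intro _ _; exact Relation.ReflTransGen.refl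
  | succ j hij ih =>
    intro hj hmem
    have h1 : ReachIn G s (pp i) (pp j) :=
      ih (by omega) (fun l h1 h2 => hmem l h1 (by omega))
    exact h1.tail ⟨hmem j hij (by omega), hmem (j+1) (by omega) le_rfl, hadj j hj⟩

end Basics
section Td2
variable {V : Type} {G : SimpleGraph V}

lemma td2Aux_empty (G : SimpleGraph V) : ∀ f : ℕ, td2Aux G f (∅ : Finset V) = 0 := by
  intro f; cases f with
  | zero => rfl
  | succ n => simp [td2Aux]

lemma td2Aux_congr (G : SimpleGraph V) :
    ∀ f₁ f₂ : ℕ, ∀ s : Finset V, s.card ≤ f₁ → s.card ≤ f₂ →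
      td2Aux G f₁ s = td2Aux G f₂ s := by
  intro f₁
  induction f₁ with
  | zero =>
    intro f₂ s h1 _
    have : s = ∅ := Finset.card_eq_zero.mp (by omega)
    subst this
    rw [td2Aux_empty, td2Aux_empty]
  | succ f ih =>
    intro f₂ s h1 h2
    by_cases hs : s = ∅
    · subst hs; rw [td2Aux_empty, td2Aux_empty]
    · have hpos : 0 < s.card := Finset.card_pos.mpr (Finset.nonempty_of_ne_empty hs)
      cases f₂ with
      | zero => omega
      | succ g =>
        rw [td2Aux, td2Aux]
        simp only [dif_neg hs]
        by_cases hb : IsBlockSet G s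
        · rw [if_pos hb, if_pos hb]
          congr 1
          refine Finset.inf'_congr _ rfl (fun v hv => ?_)
          have hc : (s.erase v).card = s.card - 1 := Finset.card_erase_of_mem hv
          rw [ih f (s.erase v) (by omega) (by omega), ih g (s.erase v) (by omega) (by omega)]
        · rw [if_neg hb, if_neg hb]
          apply Finset.sup_congr rfl
          intro B hB
          rw [Finset.mem_filter, Finset.mem_powerset] at hB
          have hBs : B ⊆ s := hB.1
          have hBne : B ≠ s := by
            intro h; exact hb (h ▸ hB.2.2.1)
          have hcard : B.card < s.card := Finset.card_lt_card (Finset.ssubset_iff_subset_ne.mpr ⟨hBs, hBne⟩)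
          rw [ih f B (by omega) (by omega), ih g B (by omega) (by omega)]

end Td2
section Td2Char
variable {V : Type} {G : SimpleGraph V}

lemma td2On_eq_blockset {s : Finset V} (hs : s ≠ ∅) (hb : IsBlockSet G s) :
    td2On G s = 1 + s.inf' (Finset.nonempty_of_ne_empty hs) (fun v => td2On G (s.erase v)) := by
  obtain ⟨m, hm⟩ : ∃ m, s.card = m + 1 := by
    have := Finset.card_pos.mpr (Finset.nonempty_of_ne_empty hs)
    exact ⟨s.card - 1, by omega⟩
  rw [td2On, hm, td2Aux, dif_neg hs, if_pos hb]
  congr 1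
  refine Finset.inf'_congr _ rfl (fun v hv => ?_)
  have hc := Finset.card_erase_of_mem hv
  rw [td2On]
  exact td2Aux_congr G m _ (s.erase v) (by omega) le_rfl

lemma td2On_eq_sup {s : Finset V} (hs : s ≠ ∅) (hb : ¬IsBlockSet G s) :
    td2On G s = (s.powerset.filter (fun B => IsBlock G s B)).sup (fun B => td2On G B) := by
  obtain ⟨m, hm⟩ : ∃ m, s.card = m + 1 := by
    have := Finset.card_pos.mpr (Finset.nonempty_of_ne_empty hs)
    exact ⟨s.card - 1, by omega⟩
  rw [td2On, hm, td2Aux, dif_neg hs, if_neg hb]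
  apply Finset.sup_congr rfl
  intro B hB
  rw [Finset.mem_filter, Finset.mem_powerset] at hB
  have hBne : B ≠ s := fun h => hb (h ▸ hB.2.2.1)
  have hcard : B.card < s.card :=
    Finset.card_lt_card (Finset.ssubset_iff_subset_ne.mpr ⟨hB.1, hBne⟩)
  rw [td2On]
  exact td2Aux_congr G m _ B (by omega) le_rfl

lemma exists_erase_td2On_le {s : Finset V} {k : ℕ} (hs : s ≠ ∅) (hb : IsBlockSet G s)
    (h : td2On G s ≤ k) : ∃ v ∈ s, td2On G (s.erase v) ≤ k - 1 := by
  rw [td2On_eq_blockset hs hb] at h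
  obtain ⟨v, hv, he⟩ := Finset.exists_mem_eq_inf' (Finset.nonempty_of_ne_empty hs)
    (fun v => td2On G (s.erase v))
  rw [he] at h
  exact ⟨v, hv, by omega⟩

lemma td2On_le_of_isBlock {s B : Finset V} {k : ℕ} (hs : s ≠ ∅) (hb : ¬IsBlockSet G s)
    (hB : IsBlock G s B) (h : td2On G s ≤ k) : td2On G B ≤ k := by
  rw [td2On_eq_sup hs hb] at h
  exact le_trans (Finset.le_sup (f := fun B => td2On G B)
    (Finset.mem_filter.mpr ⟨Finset.mem_powerset.mpr hB.1, hB⟩)) h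

lemma exists_isBlock_superset {s C : Finset V} (hC : IsBlockSet G C) (hCs : C ⊆ s) :
    ∃ B, IsBlock G s B ∧ C ⊆ B := by
  classical
  set F := s.powerset.filter (fun B => IsBlockSet G B ∧ C ⊆ B) with hF
  have hne : F.Nonempty :=
    ⟨C, Finset.mem_filter.mpr ⟨Finset.mem_powerset.mpr hCs, hC, le_rfl⟩⟩
  obtain ⟨B, hBF, hmax⟩ := Finset.exists_max_image F Finset.card hne
  rw [hF, Finset.mem_filter, Finset.mem_powerset] at hBF
  refine ⟨B, ⟨hBF.1, hBF.2.1, ?_⟩, hBF.2.2⟩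
  intro B' hBB' hB's hB'
  have hB'F : B' ∈ F :=
    Finset.mem_filter.mpr ⟨Finset.mem_powerset.mpr hB's, hB', hBF.2.2.trans hBB'⟩
  exact (Finset.eq_of_subset_of_card_le hBB' (hmax B' hB'F)).symm

lemma isBlock_eq_of_two_shared {s B B' : Finset V} (hB : IsBlock G s B) (hB' : IsBlock G s B')
    (h2 : 2 ≤ (B ∩ B').card) : B = B' := by
  have hu : IsBlockSet G (B ∪ B') := blockSet_union hB.2.1 hB'.2.1 h2
  have h1 : B ∪ B' = B :=
    hB.2.2 _ Finset.subset_union_left (Finset.union_subset hB.1 hB'.1) hu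
  have h1' : B ∪ B' = B' :=
    hB'.2.2 _ Finset.subset_union_right (Finset.union_subset hB.1 hB'.1) hu
  rw [← h1, h1']

lemma td2On_lb (G : SimpleGraph V) : ∀ N : ℕ, ∀ s C : Finset V, s.card ≤ N → C ⊆ s →
    IsBlockSet G C → min 3 C.card ≤ td2On G s := by
  intro N
  induction N with
  | zero =>
    intro s C h1 hCs hC
    have hs : s = ∅ := Finset.card_eq_zero.mp (by omega)
    subst hs
    have : C = ∅ := Finset.subset_empty.mp hCs
    simp [this]
  | succ N ih =>
    intro s C h1 hCs hC
    rcases C.eq_empty_or_nonempty with rfl | hCne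
    · simp
    have hsne : s ≠ ∅ := by
      rintro rfl
      exact absurd (Finset.subset_empty.mp hCs) (Finset.nonempty_iff_ne_empty.mp hCne)
    have hspos : 0 < s.card := Finset.card_pos.mpr (Finset.nonempty_of_ne_empty hsne)
    by_cases hb : IsBlockSet G s
    · rw [td2On_eq_blockset hsne hb]
      have hstep : ∀ v ∈ s, min 3 C.card - 1 ≤ td2On G (s.erase v) := by
        intro v hv
        by_cases hvC : v ∈ C
        · by_cases h3 : 3 ≤ C.card
          · have hce : 2 ≤ (C.erase v).card := by
              rw [Finset.card_erase_of_mem hvC]; omega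
            obtain ⟨a, ha, b, hbb, hab⟩ := Finset.one_lt_card.mp (by omega : 1 < (C.erase v).card)
            have hconn : ConnIn G (C.erase v) := hC.2 v hvC (Finset.card_pos.mp (by omega))
            obtain ⟨x, hx, y, hy, hxy⟩ := connIn_exists_adj hconn ha hbb hab
            have hpair : ({x, y} : Finset V) ⊆ s.erase v := by
              intro z hz
              rcases Finset.mem_insert.mp hz with rfl | hz
              · exact Finset.mem_erase.mpr
                  ⟨Finset.ne_of_mem_erase hx, hCs (Finset.mem_of_mem_erase hx)⟩
              · rw [Finset.mem_singleton] at hz; subst hz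
                exact Finset.mem_erase.mpr
                  ⟨Finset.ne_of_mem_erase hy, hCs (Finset.mem_of_mem_erase hy)⟩
            have hrec := ih (s.erase v) {x, y}
              (by rw [Finset.card_erase_of_mem hv]; omega) hpair (blockSet_pair hxy)
            rw [Finset.card_pair hxy.ne] at hrec
            norm_num at hrec ⊢
            omega
          · by_cases h2 : C.card = 2
            · have hs2 : 2 ≤ s.card := le_trans (by omega) (Finset.card_le_card hCs)
              obtain ⟨w, hw⟩ : (s.erase v).Nonempty := Finset.card_pos.mp
                (by rw [Finset.card_erase_of_mem hv]; omega)
              have hrec := ih (s.erase v) {w} (by rw [Finset.card_erase_of_mem hv]; omega)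
                (Finset.singleton_subset_iff.mpr hw) (blockSet_singleton G w)
              rw [Finset.card_singleton] at hrec
              norm_num at hrec ⊢
              omega
            · have hc1 : C.card ≤ 1 := by omega
              have := Nat.min_le_right 3 C.card
              omega
        · have hrec := ih (s.erase v) C (by rw [Finset.card_erase_of_mem hv]; omega)
            (fun a ha => Finset.mem_erase.mpr ⟨fun h => hvC (h ▸ ha), hCs ha⟩) hC
          omega
      have hinf := Finset.le_inf' (Finset.nonempty_of_ne_empty hsne)
        (fun v => td2On G (s.erase v)) hstep
      have hmin : 1 ≤ min 3 C.card :=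
        Nat.le_min.mpr ⟨by norm_num, Finset.card_pos.mpr hCne⟩
      omega
    · obtain ⟨B, hB, hCB⟩ := exists_isBlock_superset hC hCs
      have hBcard : B.card ≤ N := by
        have hne : B ≠ s := fun h => hb (h ▸ hB.2.1)
        have := Finset.card_lt_card (Finset.ssubset_iff_subset_ne.mpr ⟨hB.1, hne⟩)
        omega
      exact le_trans (ih B C hBcard hCB hC) (td2On_le_of_isBlock hsne hb hB le_rfl)

lemma two_le_td2On {s : Finset V} {a b : V} (ha : a ∈ s) (hb : b ∈ s) (hab : G.Adj a b) :
    2 ≤ td2On G s := by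
  have h := td2On_lb G s.card s {a, b} le_rfl
    (by intro z hz; rcases Finset.mem_insert.mp hz with rfl | hz
        · exact ha
        · rw [Finset.mem_singleton] at hz; subst hz; exact hb)
    (blockSet_pair hab)
  rw [Finset.card_pair hab.ne] at h
  norm_num at h
  omega

lemma three_le_td2On {s C : Finset V} (hCs : C ⊆ s) (hC : IsBlockSet G C) (h3 : 3 ≤ C.card) :
    3 ≤ td2On G s := by
  have h := td2On_lb G s.card s C le_rfl hCs hC
  have := Nat.min_le_left 3 C.card
  omega

end Td2Char
section Interval
variable {V : Type} {G : SimpleGraph V}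

lemma isBlock_interval {s B : Finset V} (hB : IsBlock G s B) {pp : ℕ → V} {n : ℕ}
    (hmem : ∀ i, i < n → pp i ∈ s)
    (hinj : ∀ i, i < n → ∀ j, j < n → pp i = pp j → i = j)
    (hadj : ∀ i, i + 1 < n → G.Adj (pp i) (pp (i + 1)))
    {a b : ℕ} (hab : a ≤ b) (hbn : b < n) (haB : pp a ∈ B) (hbB : pp b ∈ B) :
    ∀ i, a ≤ i → i ≤ b → pp i ∈ B := by
  rcases eq_or_lt_of_le hab with rfl | hab'
  · intro i h1 h2
    have : i = a := le_antisymm h2 h1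
    subst this; exact haB
  set Q : Finset V := (Finset.Icc a b).image pp with hQ
  have hQs : Q ⊆ s := by
    intro x hx
    obtain ⟨i, hi, rfl⟩ := Finset.mem_image.mp hx
    rw [Finset.mem_Icc] at hi
    exact hmem i (by omega)
  have hQmem : ∀ i, a ≤ i → i ≤ b → pp i ∈ Q := fun i h1 h2 =>
    Finset.mem_image.mpr ⟨i, Finset.mem_Icc.mpr ⟨h1, h2⟩, rfl⟩
  suffices hBS : IsBlockSet G (B ∪ Q) by
    have heq := hB.2.2 (B ∪ Q) Finset.subset_union_left (Finset.union_subset hB.1 hQs) hBS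
    intro i h1 h2
    have hmem' : pp i ∈ B ∪ Q := Finset.mem_union_right _ (hQmem i h1 h2)
    rwa [heq] at hmem'
  constructor
  · apply connIn_of_anchor (x₀ := pp a) (Finset.mem_union_left _ haB)
    intro x hx
    rcases Finset.mem_union.mp hx with hx | hx
    · exact reachIn_mono Finset.subset_union_left (hB.2.1.1.2 (pp a) haB x hx)
    · obtain ⟨i, hi, rfl⟩ := Finset.mem_image.mp hx
      rw [Finset.mem_Icc] at hi
      apply reachIn_along hadj hi.1 (by omega)
      intro l h1 h2
      exact Finset.mem_union_right _ (hQmem l h1 (by omega))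
  · intro v hv hne
    have hBv : (B.erase v).Nonempty := by
      by_contra hBv
      have hall : ∀ x ∈ B, x = v := by
        intro x hx
        by_contra hxv
        exact hBv ⟨x, Finset.mem_erase.mpr ⟨hxv, hx⟩⟩
      have h1 : pp a = v := hall _ haB
      have h2 : pp b = v := hall _ hbB
      have : a = b := hinj a (by omega) b (by omega) (h1.trans h2.symm)
      omega
    obtain ⟨w₀, hw₀⟩ := hBv
    have hw₀v : w₀ ≠ v := Finset.ne_of_mem_erase hw₀
    have hw₀B : w₀ ∈ B := Finset.mem_of_mem_erase hw₀
    have hconnBv : ConnIn G (B.erase v) := by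
      by_cases hvB : v ∈ B
      · exact hB.2.1.2 v hvB ⟨w₀, hw₀⟩
      · rw [Finset.erase_eq_of_notMem hvB]; exact hB.2.1.1
    rw [Finset.erase_union_distrib]
    apply connIn_of_anchor (x₀ := w₀) (Finset.mem_union_left _ hw₀)
    intro x hx
    have reachB : ∀ y ∈ B.erase v, ReachIn G (B.erase v ∪ Q.erase v) w₀ y := fun y hy =>
      reachIn_mono Finset.subset_union_left (hconnBv.2 w₀ hw₀ y hy)
    rcases Finset.mem_union.mp hx with hx | hx
    · exact reachB x hx
    · have hxv : x ≠ v := Finset.ne_of_mem_erase hx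
      obtain ⟨i, hi, rfl⟩ := Finset.mem_image.mp (Finset.mem_of_mem_erase hx)
      rw [Finset.mem_Icc] at hi
      by_cases hvq : ∃ c, a ≤ c ∧ c ≤ b ∧ pp c = v
      · obtain ⟨c, hc1, hc2, hc3⟩ := hvq
        have hic : i ≠ c := by
          intro h; exact hxv (h ▸ hc3)
        rcases lt_or_gt_of_ne hic with hlt | hgt
        · have hav : pp a ≠ v := by
            intro h
            have : a = c := hinj a (by omega) c (by omega) (h.trans hc3.symm)
            omega
          have r1 := reachB (pp a) (Finset.mem_erase.mpr ⟨hav, haB⟩)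
          have r2 : ReachIn G (B.erase v ∪ Q.erase v) (pp a) (pp i) := by
            apply reachIn_mono Finset.subset_union_right
            apply reachIn_along hadj hi.1 (by omega)
            intro l h1 h2
            refine Finset.mem_erase.mpr ⟨?_, hQmem l h1 (by omega)⟩
            intro h
            have : l = c := hinj l (by omega) c (by omega) (h.trans hc3.symm)
            omega
          exact reachIn_trans r1 r2
        · have hbv : pp b ≠ v := by
            intro h
            have : b = c := hinj b (by omega) c (by omega) (h.trans hc3.symm)
            omega
          have r1 := reachB (pp b) (Finset.mem_erase.mpr ⟨hbv, hbB⟩)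
          have r2 : ReachIn G (B.erase v ∪ Q.erase v) (pp i) (pp b) := by
            apply reachIn_mono Finset.subset_union_right
            apply reachIn_along hadj hi.2 (by omega)
            intro l h1 h2
            refine Finset.mem_erase.mpr ⟨?_, hQmem l (by omega) h2⟩
            intro h
            have : l = c := hinj l (by omega) c (by omega) (h.trans hc3.symm)
            omega
          exact reachIn_trans r1 (reachIn_symm r2)
      · push_neg at hvq
        have hav : pp a ≠ v := hvq a le_rfl (by omega)
        have r1 := reachB (pp a) (Finset.mem_erase.mpr ⟨hav, haB⟩)
        have r2 : ReachIn G (B.erase v ∪ Q.erase v) (pp a) (pp i) := by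
          apply reachIn_mono Finset.subset_union_right
          apply reachIn_along hadj hi.1 (by omega)
          intro l h1 h2
          exact Finset.mem_erase.mpr ⟨hvq l h1 (by omega), hQmem l h1 (by omega)⟩
        exact reachIn_trans r1 r2

end Interval
section Lists
variable {V : Type} {G : SimpleGraph V}

/-- The list of indices `l` describes an induced path w.r.t. vertex map `pp`. -/
def IndList (G : SimpleGraph V) (pp : ℕ → V) (l : List ℕ) : Prop :=
  ∀ i j : ℕ, ∀ hi : i < l.length, ∀ hj : j < l.length,
    G.Adj (pp l[i]) (pp l[j]) → (i + 1 = j ∨ j + 1 = i)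

lemma exists_induced_sublist {pp : ℕ → V} :
    ∀ (L : ℕ) (l : List ℕ), l.length ≤ L →
      l.Chain' (fun a b => G.Adj (pp a) (pp b)) → l.Nodup →
      ∃ l' : List ℕ, l'.Sublist l ∧ l'.head? = l.head? ∧ l'.getLast? = l.getLast? ∧
        l'.Chain' (fun a b => G.Adj (pp a) (pp b)) ∧ l'.Nodup ∧ IndList G pp l' := by
  intro L
  induction L with
  | zero =>
    intro l hlen hchain hnodup
    have : l = [] := List.length_eq_zero_iff.mp (by omega)
    subst this
    exact ⟨[], List.Sublist.refl _, rfl, rfl, List.isChain_nil, List.nodup_nil,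
      fun i j hi hj _ => by simp at hi⟩
  | succ L ih =>
    intro l hlen hchain hnodup
    by_cases hind : IndList G pp l
    · exact ⟨l, List.Sublist.refl _, rfl, rfl, hchain, hnodup, hind⟩
    · rw [IndList] at hind
      push_neg at hind
      obtain ⟨i0, j0, hi0, hj0, hadj0, hne1, hne2⟩ := hind
      -- reduce to the case i < j
      obtain ⟨i, j, hi, hj, hij, hij2, hadj⟩ :
          ∃ i j : ℕ, ∃ hi : i < l.length, ∃ hj : j < l.length,
            i < j ∧ i + 1 ≠ j ∧ G.Adj (pp l[i]) (pp l[j]) := by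
        rcases lt_trichotomy i0 j0 with h | h | h
        · exact ⟨i0, j0, hi0, hj0, h, hne1, hadj0⟩
        · subst h; exact absurd hadj0 (G.irrefl)
        · exact ⟨j0, i0, hj0, hi0, h, hne2, hadj0.symm⟩
      have hij3 : i + 2 ≤ j := by omega
      set l₂ : List ℕ := l.take (i+1) ++ l.drop j with hl₂
      have hdropsub : (l.drop j).Sublist (l.drop (i+1)) := by
        have : l.drop j = List.drop (j - (i+1)) (l.drop (i+1)) := by
          rw [List.drop_drop]; congr 1; omega
        rw [this]
        exact List.drop_sublist _ _
      have hsub : l₂.Sublist l := by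
        conv_rhs => rw [← List.take_append_drop (i+1) l]
        exact hdropsub.append_left _
      have hlen₂ : l₂.length = (i+1) + (l.length - j) := by
        rw [hl₂, List.length_append, List.length_take, List.length_drop]
        congr 1
        omega
      have htake_ne : l.take (i+1) ≠ [] :=
        List.length_pos_iff.mp (by rw [List.length_take]; omega)
      have hdrop_ne : l.drop j ≠ [] :=
        List.length_pos_iff.mp (by rw [List.length_drop]; omega)
      have hhead : l₂.head? = l.head? := by
        rw [hl₂, List.head?_append_of_ne_nil _ htake_ne]
        cases l with
        | nil => simp at hi
        | cons a t => simp [List.take_succ_cons]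
      have hlast : l₂.getLast? = l.getLast? := by
        rw [hl₂, List.getLast?_append_of_ne_nil _ hdrop_ne]
        conv_rhs => rw [← List.take_append_drop j l]
        rw [List.getLast?_append_of_ne_nil _ hdrop_ne]
      have htake_last : (l.take (i+1)).getLast? = some l[i] := by
        rw [List.take_succ, List.getElem?_eq_getElem hi, Option.toList_some]
        exact List.getLast?_concat
      have hdrop_head : (l.drop j).head? = some l[j] := by
        rw [List.drop_eq_getElem_cons hj]
        rfl
      have hchain₂ : l₂.Chain' (fun a b => G.Adj (pp a) (pp b)) := by
        apply List.IsChain.append (hchain.take _) (hchain.drop _)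
        intro x hx y hy
        rw [htake_last] at hx
        rw [hdrop_head] at hy
        simp at hx hy
        subst hx; subst hy
        exact hadj
      have hnodup₂ : l₂.Nodup := hnodup.sublist hsub
      have hlen₂' : l₂.length ≤ L := by rw [hlen₂]; omega
      obtain ⟨l', h1, h2, h3, h4, h5, h6⟩ := ih l₂ hlen₂' hchain₂ hnodup₂
      exact ⟨l', h1.trans hsub, h2.trans hhead, h3.trans hlast, h4, h5, h6⟩

lemma indList_to_hasInducedPath {pp : ℕ → V} {n : ℕ}
    (hinj : ∀ i, i < n → ∀ j, j < n → pp i = pp j → i = j)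
    {l : List ℕ} (hbound : ∀ x ∈ l, x < n) (hnodup : l.Nodup)
    (hchain : l.Chain' (fun a b => G.Adj (pp a) (pp b))) (hind : IndList G pp l) :
    HasInducedPathOn G l.length := by
  refine ⟨fun i => pp l[i.1], ?_, ?_⟩
  · intro i j hij
    have hb1 : l[i.1] < n := hbound _ (List.getElem_mem _)
    have hb2 : l[j.1] < n := hbound _ (List.getElem_mem _)
    have h1 : l[i.1] = l[j.1] := hinj _ hb1 _ hb2 hij
    have h2 : i.1 = j.1 := by
      by_contra hne
      exact (List.Nodup.getElem_inj_iff hnodup).mp h1 |> fun h => hne h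
    exact Fin.ext h2
  · intro i j
    constructor
    · intro hadj
      exact hind i.1 j.1 i.2 j.2 hadj
    · intro h
      have hc := List.isChain_iff_getElem.mp hchain
      rcases h with h | h
      · have := hc i.1 (by omega)
        have hj : j = ⟨i.1 + 1, by omega⟩ := Fin.ext h.symm
        rw [hj]
        exact this
      · have := hc j.1 (by omega)
        have hi' : i = ⟨j.1 + 1, by omega⟩ := Fin.ext h.symm
        rw [hi']
        exact this.symm

end Lists
section Count
variable {V : Type} {G : SimpleGraph V}

lemma run_count {pp : ℕ → V} {n : ℕ} {R : ℕ → ℕ} (hn : 2 ≤ n) (hR0 : R 0 = 0)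
    (hstep : ∀ l, R l ≤ R (l + 1) ∧ R (l + 1) ≤ R l + 1)
    (hkey : ∀ x y, x < y → y < n → G.Adj (pp x) (pp y) → R x = R (y - 1))
    {l : List ℕ} (hbound : ∀ x ∈ l, x < n) (hnodup : l.Nodup)
    (hchain : l.Chain' (fun a b => G.Adj (pp a) (pp b)))
    (hhead : l.head? = some 0) (hlast : l.getLast? = some (n - 1)) :
    R (n - 2) + 2 ≤ l.length := by
  have hlne : l ≠ [] := by intro h; rw [h] at hhead; simp at hhead
  have hm1 : 1 ≤ l.length := List.length_pos_iff.mpr hlne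
  set a : ℕ → ℕ := fun i => l.getD i 0 with haa
  have hgetD : ∀ i, ∀ hi : i < l.length, a i = l[i]'hi := by
    intro i hi
    simp [haa, List.getD_eq_getElem?_getD, List.getElem?_eq_getElem hi]
  have ha0 : a 0 = 0 := by
    rw [hgetD 0 (by omega)]
    cases l with
    | nil => simp at hhead
    | cons x t => simp at hhead; exact hhead
  have halast : a (l.length - 1) = n - 1 := by
    rw [hgetD _ (by omega), ← List.getLast_eq_getElem hlne]
    exact (List.getLast_eq_iff_getLast?_eq_some hlne).mpr hlast
  have hmem : ∀ i, i < l.length → a i < n := by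
    intro i hi
    rw [hgetD i hi]
    exact hbound _ (List.getElem_mem _)
  have hainj : ∀ i j, i < l.length → j < l.length → a i = a j → i = j := by
    intro i j hi hj h
    rw [hgetD i hi, hgetD j hj] at h
    by_contra hne
    exact hne ((List.Nodup.getElem_inj_iff hnodup).mp h)
  have hadj : ∀ i, i + 1 < l.length → G.Adj (pp (a i)) (pp (a (i + 1))) := by
    intro i hi
    rw [hgetD i (by omega), hgetD (i+1) (by omega)]
    have := List.isChain_iff_getElem.mp hchain i (by omega)
    simpa using this
  have hm2 : 2 ≤ l.length := by
    by_contra h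
    push_neg at h
    have h1 : l.length - 1 = 0 := by omega
    rw [h1, ha0] at halast
    omega
  have claim : ∀ i, i + 1 < l.length → R (min (a i) (a (i + 1))) ≤ i := by
    intro i
    induction i with
    | zero =>
      intro h1
      rw [ha0]
      simp [hR0]
    | succ i ih =>
      intro h1
      have hprev := ih (by omega)
      set c := a (i + 1) with hc
      have hadj1 : G.Adj (pp (a i)) (pp c) := hadj i (by omega)
      have hadj2 : G.Adj (pp c) (pp (a (i + 2))) := hadj (i+1) (by omega)
      have hc0 : c ≠ 0 := by
        intro h
        have : i + 1 = 0 := hainj (i+1) 0 (by omega) (by omega) (by rw [← hc, h, ha0])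
        omega
      have hcn : c < n - 1 := by
        have hcb : c < n := hmem (i+1) (by omega)
        rcases Nat.lt_or_ge c (n-1) with h | h
        · exact h
        · exfalso
          have : i + 1 = l.length - 1 :=
            hainj (i+1) (l.length - 1) (by omega) (by omega) (by rw [← hc, halast]; omega)
          omega
      have hne1 : a i ≠ c := by
        intro h
        have := hainj i (i+1) (by omega) (by omega) h
        omega
      have hne2 : c ≠ a (i + 2) := by
        intro h
        have := hainj (i+1) (i+2) (by omega) (by omega) h
        omega
      have hRc := hstep (c - 1)
      have hc1 : c - 1 + 1 = c := by omega
      rw [hc1] at hRc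
      have e1 : R (min (a i) c) = R (c - 1) ∨ R (min (a i) c) = R c := by
        rcases lt_or_gt_of_ne hne1 with h | h
        · left
          rw [min_eq_left h.le]
          exact hkey _ _ h (by omega) hadj1
        · right
          rw [min_eq_right h.le]
      have e2 : R (min c (a (i + 2))) = R (c - 1) ∨ R (min c (a (i + 2))) = R c := by
        rcases lt_or_gt_of_ne hne2 with h | h
        · right
          rw [min_eq_left h.le]
        · left
          rw [min_eq_right h.le]
          exact hkey _ _ h (by omega) hadj2.symm
      have : i + 1 + 1 = i + 2 := by omega
      rw [this]
      rcases e1 with e1 | e1 <;> rcases e2 with e2 | e2 <;> omega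
  have hfin := claim (l.length - 2) (by omega)
  have hidx : l.length - 2 + 1 = l.length - 1 := by omega
  rw [hidx, halast] at hfin
  have hblast : a (l.length - 2) < n - 1 := by
    have hb : a (l.length - 2) < n := hmem _ (by omega)
    rcases Nat.lt_or_ge (a (l.length - 2)) (n-1) with h | h
    · exact h
    · exfalso
      have : l.length - 2 = l.length - 1 :=
        hainj _ _ (by omega) (by omega) (by rw [halast]; omega)
      omega
  have hadjl : G.Adj (pp (a (l.length - 2))) (pp (n - 1)) := by
    have := hadj (l.length - 2) (by omega)
    rwa [hidx, halast] at this
  have hklast := hkey _ _ hblast (by omega) hadjl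
  have hnn : n - 1 - 1 = n - 2 := by omega
  rw [hnn] at hklast
  rw [min_eq_left (by omega), hklast] at hfin
  omega

lemma run_pigeonhole {R : ℕ → ℕ} {n : ℕ} (hn : 2 ≤ n)
    (hmono : ∀ l, R l ≤ R (l + 1)) :
    ∃ u w, u ≤ w ∧ w ≤ n - 2 ∧ R u = R w ∧
      n - 1 ≤ (R (n - 2) + 1) * (w + 1 - u) := by
  classical
  have hmono' : ∀ b a, a ≤ b → R a ≤ R b := by
    intro b
    induction b with
    | zero => intro a ha; have : a = 0 := by omega
              rw [this]
    | succ b ih =>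
      intro a ha
      rcases Nat.lt_or_ge a (b+1) with h | h
      · exact le_trans (ih a (by omega)) (hmono b)
      · have : a = b + 1 := by omega
        rw [this]
  set t := R (n - 2) + 1 with ht
  have hmapsto : ∀ x ∈ Finset.range (n-1), R x ∈ Finset.range t := by
    intro x hx
    rw [Finset.mem_range] at hx ⊢
    have := hmono' (n-2) x (by omega)
    omega
  have hcard := Finset.card_eq_sum_card_fiberwise hmapsto
  rw [Finset.card_range] at hcard
  obtain ⟨r, hr, hrmax⟩ := Finset.exists_max_image (Finset.range t)
    (fun r => ((Finset.range (n-1)).filter (fun x => R x = r)).card)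
    (Finset.nonempty_range_iff.mpr (by omega))
  set F := (Finset.range (n-1)).filter (fun x => R x = r) with hF
  have hsum : (n - 1) ≤ t * F.card := by
    have h1 : (n - 1 : ℕ) = ∑ b ∈ Finset.range t,
        ((Finset.range (n-1)).filter (fun x => R x = b)).card := hcard
    have h2 := Finset.sum_le_card_nsmul (Finset.range t)
      (fun b => ((Finset.range (n-1)).filter (fun x => R x = b)).card) F.card
      (fun x hx => hrmax x hx)
    rw [Finset.card_range, smul_eq_mul] at h2
    omega
  have hFne : F.Nonempty := by
    rw [← Finset.card_pos]
    by_contra h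
    push_neg at h
    have h0 : F.card = 0 := by omega
    rw [h0, Nat.mul_zero] at hsum
    omega
  have hmin := F.min'_mem hFne
  have hmax := F.max'_mem hFne
  have hmin' := Finset.mem_filter.mp hmin
  have hmax' := Finset.mem_filter.mp hmax
  rw [Finset.mem_range] at hmin' hmax'
  have hwn : F.max' hFne < n - 1 := hmax'.1
  refine ⟨F.min' hFne, F.max' hFne, F.min'_le _ (F.max'_mem hFne), by omega,
    hmin'.2.trans hmax'.2.symm, ?_⟩
  have hsub : F ⊆ Finset.Icc (F.min' hFne) (F.max' hFne) := by
    intro x hx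
    rw [Finset.mem_Icc]
    exact ⟨F.min'_le _ hx, F.le_max' _ hx⟩
  have hcard2 : F.card ≤ F.max' hFne + 1 - F.min' hFne := by
    have h3 := Finset.card_le_card hsub
    rwa [Nat.card_Icc] at h3
  have := Nat.mul_le_mul_left t hcard2
  omega

end Count
section Small
variable {V : Type} {G : SimpleGraph V}

lemma hasInducedPathOn_one (G : SimpleGraph V) (v : V) : HasInducedPathOn G 1 := by
  refine ⟨fun _ => v, fun i j _ => Subsingleton.elim i j, ?_⟩
  intro i j
  constructor
  · intro h
    exact absurd h (G.irrefl)
  · intro h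
    have hi := i.2
    have hj := j.2
    omega

lemma hasInducedPathOn_two {a b : V} (hab : G.Adj a b) : HasInducedPathOn G 2 := by
  refine ⟨fun i => if i.1 = 0 then a else b, ?_, ?_⟩
  · intro i j h
    have hi := i.2
    have hj := j.2
    by_cases h1 : i.1 = 0 <;> by_cases h2 : j.1 = 0 <;>
      simp only [h1, h2, if_pos, if_neg, if_true, if_false] at h <;>
      first
        | (exact Fin.ext (by omega))
        | (exact absurd h hab.ne)
        | (exact absurd h.symm hab.ne)
  · intro i j
    have hi := i.2
    have hj := j.2
    by_cases h1 : i.1 = 0 <;> by_cases h2 : j.1 = 0 <;>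
      simp only [h1, h2, if_pos, if_neg, if_true, if_false]
    · constructor
      · intro h; exact absurd h (G.irrefl)
      · intro h; omega
    · constructor
      · intro _; left; omega
      · intro _; exact hab
    · constructor
      · intro _; right; omega
      · intro _; exact hab.symm
    · constructor
      · intro h; exact absurd h (G.irrefl)
      · intro h; omega

end Small

section RealArith

lemma n_ge_two_rpow {k n : ℕ} (hk : 2 ≤ k)
    (hn4 : (4:ℝ) < (n:ℝ) ^ ((1:ℝ)/((k:ℝ)-1))) : 2 ≤ n ∧ (2:ℝ) ≤ (n:ℝ) := by
  have hK : (2:ℝ) ≤ (k:ℝ) := by exact_mod_cast hk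
  have hα : (0:ℝ) ≤ 1/((k:ℝ)-1) := le_of_lt (div_pos one_pos (by linarith))
  have h1 : (1:ℝ) < (n:ℝ) := by
    by_contra h
    push_neg at h
    have := Real.rpow_le_one (Nat.cast_nonneg n) h hα
    linarith
  have : 1 < n := by exact_mod_cast h1
  exact ⟨by omega, by exact_mod_cast (by omega : 2 ≤ n)⟩

lemma rpow_aux1 {k n : ℕ} (hk : 3 ≤ k)
    (hn4 : (4:ℝ) < (n:ℝ) ^ ((1:ℝ)/((k:ℝ)-1))) :
    (n:ℝ) ^ (1 - (1:ℝ)/((k:ℝ)-1)) ≤ ((n:ℝ) - 1) / 2 := by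
  obtain ⟨hn2, hn2'⟩ := n_ge_two_rpow (by omega) hn4
  have hnpos : (0:ℝ) < (n:ℝ) := by linarith
  have heq : (n:ℝ) ^ (1 - (1:ℝ)/((k:ℝ)-1)) =
      (n:ℝ) / (n:ℝ) ^ ((1:ℝ)/((k:ℝ)-1)) := by
    rw [Real.rpow_sub hnpos, Real.rpow_one]
  rw [heq]
  have h4pos : (0:ℝ) < 4 := by norm_num
  have h1 : (n:ℝ) / (n:ℝ) ^ ((1:ℝ)/((k:ℝ)-1)) ≤ (n:ℝ) / 4 :=
    div_le_div_of_nonneg_left (by linarith) h4pos hn4.le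
  linarith

lemma rpow_main {k n h m : ℕ} (hk : 3 ≤ k)
    (hh : (n:ℝ) ^ (1 - (1:ℝ)/((k:ℝ)-1)) ≤ (h:ℝ))
    (hm : (h:ℝ) ^ ((1:ℝ)/((k:ℝ)-2)) / 2 ≤ (m:ℝ)) :
    (n:ℝ) ^ ((1:ℝ)/((k:ℝ)-1)) / 2 ≤ (m:ℝ) := by
  have hK : (3:ℝ) ≤ (k:ℝ) := by exact_mod_cast hk
  have h1 : (0:ℝ) < (k:ℝ) - 1 := by linarith
  have h2 : (0:ℝ) < (k:ℝ) - 2 := by linarith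
  have hn0 : (0:ℝ) ≤ (n:ℝ) := Nat.cast_nonneg n
  have hexp : (1 - (1:ℝ)/((k:ℝ)-1)) * ((1:ℝ)/((k:ℝ)-2)) = (1:ℝ)/((k:ℝ)-1) := by
    field_simp
    ring
  have key : (n:ℝ) ^ ((1:ℝ)/((k:ℝ)-1)) =
      ((n:ℝ) ^ (1 - (1:ℝ)/((k:ℝ)-1))) ^ ((1:ℝ)/((k:ℝ)-2)) := by
    rw [← Real.rpow_mul hn0, hexp]
  have hmono : ((n:ℝ) ^ (1 - (1:ℝ)/((k:ℝ)-1))) ^ ((1:ℝ)/((k:ℝ)-2)) ≤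
      (h:ℝ) ^ ((1:ℝ)/((k:ℝ)-2)) :=
    Real.rpow_le_rpow (Real.rpow_nonneg hn0 _) hh (le_of_lt (div_pos one_pos h2))
  rw [key]
  linarith

lemma rpow_aux2 {k n t nstar : ℕ} (hk : 3 ≤ k)
    (hn4 : (4:ℝ) < (n:ℝ) ^ ((1:ℝ)/((k:ℝ)-1)))
    (ht : (t:ℝ) + 1 < (n:ℝ) ^ ((1:ℝ)/((k:ℝ)-1)) / 2)
    (hcount : (n:ℝ) - 1 ≤ (t:ℝ) * ((nstar:ℝ) - 1)) (ht1 : 1 ≤ t) :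
    (n:ℝ) ^ (1 - (1:ℝ)/((k:ℝ)-1)) ≤ ((nstar:ℝ) - 1) / 2 := by
  obtain ⟨hn2, hn2'⟩ := n_ge_two_rpow (by omega) hn4
  have hK : (3:ℝ) ≤ (k:ℝ) := by exact_mod_cast hk
  have hnpos : (0:ℝ) < (n:ℝ) := by linarith
  set T := (n:ℝ) ^ ((1:ℝ)/((k:ℝ)-1)) / 2 with hT
  set A := (n:ℝ) ^ (1 - (1:ℝ)/((k:ℝ)-1)) with hA
  have ht0 : (0:ℝ) < (t:ℝ) := by exact_mod_cast ht1
  have hT1 : (1:ℝ) < T - 1 := by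
    rw [hT]; linarith
  have hAnonneg : (1:ℝ) ≤ A := by
    rw [hA]
    calc (1:ℝ) = (n:ℝ) ^ (0:ℝ) := (Real.rpow_zero _).symm
    _ ≤ _ := Real.rpow_le_rpow_of_exponent_le (by linarith) (by
        have : (1:ℝ)/((k:ℝ)-1) ≤ 1/2 := by
          rw [div_le_div_iff₀ (by linarith) (by norm_num)]
          linarith
        linarith)
  have hprod : A * ((n:ℝ) ^ ((1:ℝ)/((k:ℝ)-1))) = (n:ℝ) := by
    rw [hA, ← Real.rpow_add hnpos, sub_add_cancel, Real.rpow_one]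
  have hSpos : (0:ℝ) < (nstar:ℝ) - 1 := by nlinarith
  -- t ≤ T - 1
  have htT : (t:ℝ) ≤ T - 1 := by linarith
  -- (nstar - 1) ≥ (n-1)/(T-1)
  have h1 : (n:ℝ) - 1 ≤ (T - 1) * ((nstar:ℝ) - 1) := by nlinarith
  -- 2A(T-1) ≤ n - 1
  have h2aT : 2 * A * T = (n:ℝ) := by
    have : 2 * A * T = A * ((n:ℝ) ^ ((1:ℝ)/((k:ℝ)-1))) := by rw [hT]; ring
    rw [this, hprod]
  have hexpand : 2 * A * (T - 1) = 2 * A * T - 2 * A := by ring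
  have h2 : 2 * A * (T - 1) ≤ (n:ℝ) - 1 := by
    rw [hexpand, h2aT]
    linarith
  have hT1' : (0:ℝ) < T - 1 := by linarith
  have h3 : 2 * A ≤ (nstar:ℝ) - 1 := by
    by_contra hc
    push_neg at hc
    have hlt : (T - 1) * ((nstar:ℝ) - 1) < (T - 1) * (2 * A) :=
      mul_lt_mul_of_pos_left hc hT1'
    have : (T - 1) * (2 * A) = 2 * A * (T - 1) := by ring
    rw [this] at hlt
    linarith
  rw [le_div_iff₀ (by norm_num : (0:ℝ) < 2)]
  linarith
end RealArith
section MainLemma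
variable {V : Type}

lemma main_lemma (G : SimpleGraph V) :
    ∀ N : ℕ, ∀ s : Finset V, s.card ≤ N → ∀ k n : ℕ, 2 ≤ k → 1 ≤ n →
      td2On G s ≤ k →
      ∀ pp : ℕ → V,
        (∀ i, i < n → pp i ∈ s) →
        (∀ i, i < n → ∀ j, j < n → pp i = pp j → i = j) →
        (∀ i, i + 1 < n → G.Adj (pp i) (pp (i + 1))) →
        ∃ m : ℕ, (n : ℝ) ^ ((1 : ℝ) / ((k : ℝ) - 1)) / 2 ≤ (m : ℝ) ∧
          HasInducedPathOn G m := by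
  intro N
  induction N with
  | zero =>
    intro s hcard k n hk hn htd pp hmem hinj hadj
    exact absurd (hmem 0 (by omega))
      (by rw [Finset.card_eq_zero.mp (by omega : s.card = 0)]
          exact Finset.notMem_empty _)
  | succ N ih =>
    intro s hcard k n hk hn htd pp hmem hinj hadj
    by_cases hT1 : (n : ℝ) ^ ((1 : ℝ) / ((k : ℝ) - 1)) / 2 ≤ 1
    · exact ⟨1, by exact_mod_cast hT1, hasInducedPathOn_one G (pp 0)⟩
    by_cases hT2 : (n : ℝ) ^ ((1 : ℝ) / ((k : ℝ) - 1)) / 2 ≤ 2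
    · have hn2 : 2 ≤ n := by
        by_contra h
        have hn1 : n = 1 := by omega
        apply hT1
        rw [hn1, Nat.cast_one, Real.one_rpow]
        norm_num
      exact ⟨2, by exact_mod_cast hT2, hasInducedPathOn_two (hadj 0 (by omega))⟩
    push_neg at hT1 hT2
    have hn4 : (4:ℝ) < (n:ℝ) ^ ((1:ℝ)/((k:ℝ)-1)) := by linarith
    obtain ⟨hn2, hn2'⟩ := n_ge_two_rpow hk hn4
    have hsne : s ≠ ∅ := by
      intro h
      have hmm := hmem 0 (by omega)
      rw [h] at hmm
      exact Finset.notMem_empty _ hmm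
    have hk1cast : ((k - 1 : ℕ) : ℝ) - 1 = (k:ℝ) - 2 := by
      have h1 : (1:ℕ) ≤ k := by omega
      push_cast [Nat.cast_sub h1]
      ring
    have callIH : 3 ≤ k → ∀ s' : Finset V, s'.card ≤ N → td2On G s' ≤ k - 1 →
        ∀ o n' : ℕ, 1 ≤ n' → o + n' ≤ n → (∀ i, i < n' → pp (o + i) ∈ s') →
        ∃ m : ℕ, (n' : ℝ) ^ ((1 : ℝ) / ((k : ℝ) - 2)) / 2 ≤ (m : ℝ) ∧
          HasInducedPathOn G m := by
      intro hk3 s' hs'card hs'td o n' hn' hon hmem'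
      obtain ⟨m, hm1, hm2⟩ := ih s' hs'card (k-1) n' (by omega) hn' hs'td
        (fun i => pp (o + i)) hmem'
        (fun i hi j hj hIJ => by
          have := hinj (o+i) (by omega) (o+j) (by omega) hIJ
          omega)
        (fun i hi => by
          show G.Adj (pp (o + i)) (pp (o + (i + 1)))
          rw [show o + (i + 1) = o + i + 1 by ring]
          exact hadj (o+i) (by omega))
      rw [hk1cast] at hm1
      exact ⟨m, hm1, hm2⟩
    by_cases hb : IsBlockSet G s
    · -- ===== block case =====
      obtain ⟨v, hv, hvtd⟩ := exists_erase_td2On_le hsne hb htd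
      have hecard : (s.erase v).card ≤ N := by
        rw [Finset.card_erase_of_mem hv]
        omega
      rcases eq_or_lt_of_le hk with hk2 | hk3
      · exfalso
        have hTn : ((1:ℝ)/((k:ℝ)-1)) = 1 := by
          rw [← hk2]
          norm_num
        rw [hTn, Real.rpow_one] at hn4
        have hn5 : 5 ≤ n := by
          have h45 : (4:ℕ) < n := by exact_mod_cast hn4
          omega
        have hedge : ∃ x y, x ∈ s.erase v ∧ y ∈ s.erase v ∧ G.Adj x y := by
          by_cases hvp : ∃ j, j < n ∧ pp j = v
          · obtain ⟨j, hj, hjv⟩ := hvp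
            have hmem' : ∀ i, i < n → i ≠ j → pp i ∈ s.erase v := by
              intro i hi hij
              refine Finset.mem_erase.mpr ⟨?_, hmem i hi⟩
              intro h
              exact hij (hinj i hi j hj (h.trans hjv.symm))
            rcases Nat.lt_or_ge j 2 with hj2 | hj2
            · refine ⟨pp (j+1), pp (j+2), hmem' (j+1) (by omega) (by omega),
                hmem' (j+2) (by omega) (by omega), ?_⟩
              rw [show j + 2 = (j+1) + 1 by ring]
              exact hadj (j+1) (by omega)
            · exact ⟨pp 0, pp 1, hmem' 0 (by omega) (by omega),
                hmem' 1 (by omega) (by omega), hadj 0 (by omega)⟩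
          · push_neg at hvp
            have hmem' : ∀ i, i < n → pp i ∈ s.erase v := fun i hi =>
              Finset.mem_erase.mpr ⟨hvp i hi, hmem i hi⟩
            exact ⟨pp 0, pp 1, hmem' 0 (by omega), hmem' 1 (by omega), hadj 0 (by omega)⟩
        obtain ⟨x, y, hx, hy, hxy⟩ := hedge
        have := two_le_td2On hx hy hxy
        omega
      · -- k ≥ 3
        have haux1 := rpow_aux1 (by omega) hn4
        by_cases hvp : ∃ j, j < n ∧ pp j = v
        · obtain ⟨j, hj, hjv⟩ := hvp
          have hmem' : ∀ i, i < n → i ≠ j → pp i ∈ s.erase v := by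
            intro i hi hij
            refine Finset.mem_erase.mpr ⟨?_, hmem i hi⟩
            intro h
            exact hij (hinj i hi j hj (h.trans hjv.symm))
          rcases le_or_gt (n - 1 - j) j with hbig | hbig
          · obtain ⟨m, hm1, hm2⟩ := callIH (by omega) (s.erase v) hecard hvtd 0 j
              (by omega) (by omega)
              (fun i hi => hmem' (0+i) (by omega) (by omega))
            refine ⟨m, rpow_main (by omega) ?_ hm1, hm2⟩
            have hjr : ((n:ℝ) - 1)/2 ≤ (j:ℝ) := by
              have hc : (n:ℝ) - 1 ≤ 2*(j:ℝ) := by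
                have : n - 1 ≤ 2 * j := by omega
                exact_mod_cast this
              linarith
            linarith
          · obtain ⟨m, hm1, hm2⟩ := callIH (by omega) (s.erase v) hecard hvtd (j+1) (n-1-j)
              (by omega) (by omega)
              (fun i hi => hmem' (j+1+i) (by omega) (by omega))
            refine ⟨m, rpow_main (by omega) ?_ hm1, hm2⟩
            have hjr : ((n:ℝ) - 1)/2 ≤ ((n-1-j : ℕ):ℝ) := by
              have hc : (n:ℝ) - 1 ≤ 2*((n-1-j:ℕ):ℝ) := by
                have : n - 1 ≤ 2 * (n-1-j) := by omega
                exact_mod_cast this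
              linarith
            linarith
        · push_neg at hvp
          obtain ⟨m, hm1, hm2⟩ := callIH (by omega) (s.erase v) hecard hvtd 0 n
            (by omega) (by omega)
            (fun i hi => Finset.mem_erase.mpr ⟨hvp (0+i) (by omega), hmem (0+i) (by omega)⟩)
          refine ⟨m, rpow_main (by omega) ?_ hm1, hm2⟩
          linarith
    · -- ===== non-block case =====
      have hpairsub : ∀ l, l + 1 < n → ({pp l, pp (l+1)} : Finset V) ⊆ s := by
        intro l hl x hx
        rcases Finset.mem_insert.mp hx with rfl | hx
        · exact hmem l (by omega)
        · rw [Finset.mem_singleton] at hx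
          subst hx
          exact hmem (l+1) hl
      have hBex : ∀ l : ℕ, ∃ B : Finset V, l + 1 < n →
          IsBlock G s B ∧ pp l ∈ B ∧ pp (l+1) ∈ B := by
        intro l
        by_cases hl : l + 1 < n
        · obtain ⟨B, hB, hsub⟩ := exists_isBlock_superset
            (blockSet_pair (hadj l hl)) (hpairsub l hl)
          exact ⟨B, fun _ => ⟨hB, hsub (by simp), hsub (by simp)⟩⟩
        · exact ⟨∅, fun h => absurd h hl⟩
      choose Bf hBf using hBex
      have huniq : ∀ l, l + 1 < n → ∀ B, IsBlock G s B → pp l ∈ B → pp (l+1) ∈ B →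
          B = Bf l := by
        intro l hl B hB h1 h2
        apply isBlock_eq_of_two_shared hB (hBf l hl).1
        have hne : pp l ≠ pp (l+1) := by
          intro h
          have := hinj l (by omega) (l+1) (by omega) h
          omega
        calc 2 = ({pp l, pp (l+1)} : Finset V).card := (Finset.card_pair hne).symm
        _ ≤ (B ∩ Bf l).card := by
            apply Finset.card_le_card
            intro x hx
            rcases Finset.mem_insert.mp hx with rfl | hx
            · exact Finset.mem_inter.mpr ⟨h1, (hBf l hl).2.1⟩
            · rw [Finset.mem_singleton] at hx
              subst hx
              exact Finset.mem_inter.mpr ⟨h2, (hBf l hl).2.2⟩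
      set R : ℕ → ℕ := fun l => ((Finset.range l).filter (fun j => Bf j ≠ Bf (j+1))).card
        with hR
      have hR0 : R 0 = 0 := by simp [hR]
      have hRsucc : ∀ l, R (l+1) = if Bf l ≠ Bf (l+1) then R l + 1 else R l := by
        intro l
        rw [hR]
        simp only
        rw [Finset.range_add_one, Finset.filter_insert]
        by_cases h : Bf l ≠ Bf (l+1)
        · rw [if_pos h, if_pos h, Finset.card_insert_of_notMem]
          intro hcon
          have := Finset.mem_of_mem_filter _ hcon
          simp at this
        · rw [if_neg h, if_neg h]
      have hstep : ∀ l, R l ≤ R (l+1) ∧ R (l+1) ≤ R l + 1 := by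
        intro l
        rw [hRsucc l]
        by_cases h : Bf l ≠ Bf (l+1)
        · rw [if_pos h]; omega
        · rw [if_neg h]; omega
      have hmono' : ∀ b a : ℕ, a ≤ b → R a ≤ R b := by
        intro b
        induction b with
        | zero => intro a ha; have : a = 0 := by omega
                  rw [this]
        | succ b ihb =>
          intro a ha
          rcases Nat.lt_or_ge a (b+1) with h | h
          · exact le_trans (ihb a (by omega)) (hstep b).1
          · have : a = b + 1 := by omega
            rw [this]
      have hkey : ∀ x y, x < y → y < n → G.Adj (pp x) (pp y) → R x = R (y-1) := by
        intro x y hxy hyn hxyadj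
        have hpairsub' : ({pp x, pp y} : Finset V) ⊆ s := by
          intro z hz
          rcases Finset.mem_insert.mp hz with rfl | hz
          · exact hmem x (by omega)
          · rw [Finset.mem_singleton] at hz
            subst hz
            exact hmem y hyn
        obtain ⟨B, hBmax, hBsub⟩ := exists_isBlock_superset (blockSet_pair hxyadj) hpairsub'
        have hint : ∀ i, x ≤ i → i ≤ y → pp i ∈ B :=
          isBlock_interval hBmax hmem hinj hadj (le_of_lt hxy) hyn
            (hBsub (by simp)) (hBsub (by simp))
        have hBfeq : ∀ l, x ≤ l → l + 1 ≤ y → Bf l = B := by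
          intro l h1 h2
          exact (huniq l (by omega) B hBmax (hint l h1 (by omega))
            (hint (l+1) (by omega) h2)).symm
        have hconst : ∀ d, x + d ≤ y - 1 → R (x + d) = R x := by
          intro d
          induction d with
          | zero => intro _; rfl
          | succ d ihd =>
            intro hd
            have h1 : Bf (x+d) = Bf (x+d+1) := by
              rw [hBfeq (x+d) (by omega) (by omega), hBfeq (x+d+1) (by omega) (by omega)]
            rw [show x + (d+1) = (x+d)+1 by ring, hRsucc, if_neg (by simp [h1]),
              ihd (by omega)]
        have hfin := hconst (y - 1 - x) (by omega)
        rw [show x + (y-1-x) = y-1 by omega] at hfin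
        exact hfin.symm
      -- induced list from the full path
      have hl₀chain : (List.range n).Chain' (fun a b => G.Adj (pp a) (pp b)) := by
        apply List.isChain_iff_getElem.mpr
        intro i hi
        rw [List.length_range] at hi
        simp only [List.get_eq_getElem, List.getElem_range]
        exact hadj i (by omega)
      obtain ⟨l', hsub', hhead', hlast', hchain', hnodup', hind'⟩ :=
        exists_induced_sublist n (List.range n) (by rw [List.length_range]) hl₀chain
          (List.nodup_range)
      have hbound' : ∀ x ∈ l', x < n := by
        intro x hx
        have := hsub'.subset hx
        rwa [List.mem_range] at this
      have hh0 : l'.head? = some 0 := by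
        rw [hhead']
        have hn' : n = (n-1) + 1 := by omega
        rw [hn', List.range_succ_eq_map]
        rfl
      have hlast0 : l'.getLast? = some (n-1) := by
        rw [hlast']
        have hn' : n = (n-1) + 1 := by omega
        rw [hn', List.range_succ]
        simp
      have hcount := run_count hn2 hR0 hstep hkey hbound' hnodup' hchain' hh0 hlast0
      have hip := indList_to_hasInducedPath hinj hbound' hnodup' hchain' hind'
      by_cases hchainbig :
          (n:ℝ) ^ ((1:ℝ)/((k:ℝ)-1)) / 2 ≤ ((R (n-2) + 2 : ℕ) : ℝ)
      · refine ⟨l'.length, le_trans hchainbig ?_, hip⟩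
        exact_mod_cast Nat.cast_le.mpr hcount
      push_neg at hchainbig
      obtain ⟨u, w, huw, hwn2, hRuw, hcnt⟩ := run_pigeonhole (R := R) hn2
        (fun l => (hstep l).1)
      have hwn : w + 1 < n := by omega
      have hRconst : ∀ l, u ≤ l → l ≤ w → R l = R u := by
        intro l h1 h2
        have a1 := hmono' l u h1
        have a2 := hmono' w l h2
        omega
      have hBfstep : ∀ l, u ≤ l → l + 1 ≤ w → Bf (l+1) = Bf l := by
        intro l h1 h2
        by_contra hne
        have := hRsucc l
        rw [if_pos (show Bf l ≠ Bf (l+1) from fun h => hne h.symm)] at this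
        have e1 := hRconst l h1 (by omega)
        have e2 := hRconst (l+1) (by omega) h2
        omega
      have hBfconst : ∀ l, u ≤ l → l ≤ w → Bf l = Bf u := by
        have haux : ∀ d, u + d ≤ w → Bf (u+d) = Bf u := by
          intro d
          induction d with
          | zero => intro _; rfl
          | succ d ihd =>
            intro hd
            rw [show u + (d+1) = (u+d)+1 by ring, hBfstep (u+d) (by omega) (by omega),
              ihd (by omega)]
        intro l h1 h2
        have := haux (l - u) (by omega)
        rwa [show u + (l-u) = l by omega] at this
      set Bs := Bf u with hBs
      have hBsblock : IsBlock G s Bs := (hBf u (by omega)).1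
      have hsegmem : ∀ i, u ≤ i → i ≤ w + 1 → pp i ∈ Bs := by
        intro i h1 h2
        rcases Nat.lt_or_ge i (w+1) with h | h
        · have hmm := (hBf i (by omega)).2.1
          rwa [hBfconst i h1 (by omega)] at hmm
        · have hiw : i = w + 1 := by omega
          have hmm := (hBf w (by omega)).2.2
          rw [hBfconst w huw le_rfl] at hmm
          rwa [hiw]
      have hBstd : td2On G Bs ≤ k := td2On_le_of_isBlock hsne hb hBsblock htd
      have hBsne : Bs ≠ ∅ := by
        intro h
        have := hsegmem u le_rfl (by omega)
        rw [h] at this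
        exact Finset.notMem_empty _ this
      have hBscard : Bs.card ≤ s.card := Finset.card_le_card hBsblock.1
      obtain ⟨v, hv, hvtd⟩ := exists_erase_td2On_le hBsne hBsblock.2.1 hBstd
      have hecard : (Bs.erase v).card ≤ N := by
        rw [Finset.card_erase_of_mem hv]
        have : 0 < Bs.card := Finset.card_pos.mpr ⟨v, hv⟩
        omega
      set t := R (n-2) + 1 with ht
      set nstar := w + 2 - u with hnstar
      have hnstar2 : 2 ≤ nstar := by omega
      have hcntR : (n:ℝ) - 1 ≤ (t:ℝ) * ((nstar:ℝ) - 1) := by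
        have h1 : ((n - 1 : ℕ):ℝ) ≤ ((t * (w + 1 - u) : ℕ):ℝ) := Nat.cast_le.mpr hcnt
        have h2 : ((n - 1:ℕ):ℝ) = (n:ℝ) - 1 := by
          push_cast [Nat.cast_sub (by omega : 1 ≤ n)]
          ring
        have h3 : ((w + 1 - u:ℕ):ℝ) = (nstar:ℝ) - 1 := by
          rw [hnstar]
          push_cast [Nat.cast_sub (by omega : u ≤ w + 1), Nat.cast_sub (by omega : u ≤ w + 2)]
          ring
        rw [h2] at h1
        rw [Nat.cast_mul, h3] at h1
        exact h1
      rcases eq_or_lt_of_le hk with hk2 | hk3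
      · -- k = 2
        exfalso
        rcases Nat.lt_or_ge u w with huw2 | huw2
        · have h3 : 3 ≤ Bs.card := by
            have m1 := hsegmem u le_rfl (by omega)
            have m2 := hsegmem (u+1) (by omega) (by omega)
            have m3 := hsegmem (u+2) (by omega) (by omega)
            have hsubset : ({pp u, pp (u+1), pp (u+2)} : Finset V) ⊆ Bs := by
              intro x hx
              rcases Finset.mem_insert.mp hx with rfl | hx
              · exact m1
              rcases Finset.mem_insert.mp hx with rfl | hx
              · exact m2
              rw [Finset.mem_singleton] at hx
              subst hx
              exact m3
            have hne12 : pp u ≠ pp (u+1) := by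
              intro h
              have := hinj u (by omega) (u+1) (by omega) h
              omega
            have hne13 : pp u ≠ pp (u+2) := by
              intro h
              have := hinj u (by omega) (u+2) (by omega) h
              omega
            have hne23 : pp (u+1) ≠ pp (u+2) := by
              intro h
              have := hinj (u+1) (by omega) (u+2) (by omega) h
              omega
            have hcard3 : ({pp u, pp (u+1), pp (u+2)} : Finset V).card = 3 := by
              rw [Finset.card_insert_of_notMem (by simp [hne12, hne13]),
                Finset.card_pair hne23]
            calc 3 = _ := hcard3.symm
            _ ≤ Bs.card := Finset.card_le_card hsubset
          have := three_le_td2On hBsblock.1 hBsblock.2.1 h3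
          omega
        · -- u = w
          have huweq : w = u := by omega
          have htn : n - 1 ≤ t := by
            rw [huweq] at hcnt
            have : u + 1 - u = 1 := by omega
            rw [this, Nat.mul_one] at hcnt
            omega
          have hTn : ((1:ℝ)/((k:ℝ)-1)) = 1 := by
            rw [← hk2]
            norm_num
          rw [hTn, Real.rpow_one] at hchainbig
          have hc1 : (n:ℝ) ≤ ((R (n-2) + 2 : ℕ):ℝ) := by
            have : n ≤ R (n-2) + 2 := by omega
            exact_mod_cast this
          linarith
      · -- k ≥ 3 : dive into the block Bs
        have htreal : ((t:ℝ)) + 1 < (n:ℝ) ^ ((1:ℝ)/((k:ℝ)-1)) / 2 := by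
          have : ((R (n-2) + 2 : ℕ):ℝ) = (t:ℝ) + 1 := by
            rw [ht]
            push_cast
            ring
          linarith [hchainbig, this.symm.le]
        have haux2 := rpow_aux2 (by omega) hn4 htreal hcntR (by omega)
        have hsegerase : ∀ i, u ≤ i → i ≤ w + 1 → pp i ≠ v → pp i ∈ Bs.erase v :=
          fun i h1 h2 h3 => Finset.mem_erase.mpr ⟨h3, hsegmem i h1 h2⟩
        by_cases hvp : ∃ c, c < nstar ∧ pp (u + c) = v
        · obtain ⟨c, hc, hcv⟩ := hvp
          have hmem' : ∀ i, u ≤ i → i ≤ w + 1 → i ≠ u + c → pp i ∈ Bs.erase v := by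
            intro i h1 h2 hic
            apply hsegerase i h1 h2
            intro h
            exact hic (hinj i (by omega) (u+c) (by omega) (h.trans hcv.symm))
          rcases le_or_gt (nstar - 1 - c) c with hbig | hbig
          · -- lower half: o = u, n' = c
            obtain ⟨m, hm1, hm2⟩ := callIH (by omega) (Bs.erase v) hecard hvtd u c
              (by omega) (by omega)
              (fun i hi => hmem' (u+i) (by omega) (by omega) (by omega))
            refine ⟨m, rpow_main (by omega) ?_ hm1, hm2⟩
            have hcr : ((nstar:ℝ) - 1)/2 ≤ (c:ℝ) := by
              have hcc : (nstar:ℝ) - 1 ≤ 2*(c:ℝ) := by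
                have h5 : nstar - 1 ≤ 2 * c := by omega
                have h6 : ((nstar - 1:ℕ):ℝ) = (nstar:ℝ) - 1 := by
                  push_cast [Nat.cast_sub (by omega : 1 ≤ nstar)]
                  ring
                calc (nstar:ℝ) - 1 = ((nstar - 1:ℕ):ℝ) := h6.symm
                _ ≤ ((2*c:ℕ):ℝ) := Nat.cast_le.mpr h5
                _ = 2*(c:ℝ) := by push_cast; ring
              linarith
            linarith
          · -- upper half: o = u + c + 1, n' = nstar - 1 - c
            obtain ⟨m, hm1, hm2⟩ := callIH (by omega) (Bs.erase v) hecard hvtd (u+c+1)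
              (nstar - 1 - c) (by omega) (by omega)
              (fun i hi => hmem' (u+c+1+i) (by omega) (by omega) (by omega))
            refine ⟨m, rpow_main (by omega) ?_ hm1, hm2⟩
            have hcr : ((nstar:ℝ) - 1)/2 ≤ ((nstar - 1 - c:ℕ):ℝ) := by
              have hcc : (nstar:ℝ) - 1 ≤ 2*((nstar - 1 - c:ℕ):ℝ) := by
                have h5 : nstar - 1 ≤ 2 * (nstar - 1 - c) := by omega
                have h6 : ((nstar - 1:ℕ):ℝ) = (nstar:ℝ) - 1 := by
                  push_cast [Nat.cast_sub (by omega : 1 ≤ nstar)]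
                  ring
                calc (nstar:ℝ) - 1 = ((nstar - 1:ℕ):ℝ) := h6.symm
                _ ≤ ((2*(nstar - 1 - c):ℕ):ℝ) := Nat.cast_le.mpr h5
                _ = 2*((nstar - 1 - c:ℕ):ℝ) := by push_cast; ring
              linarith
            linarith
        · push_neg at hvp
          obtain ⟨m, hm1, hm2⟩ := callIH (by omega) (Bs.erase v) hecard hvtd u nstar
            (by omega) (by omega)
            (fun i hi => hsegerase (u+i) (by omega) (by omega) (hvp i hi))
          refine ⟨m, rpow_main (by omega) ?_ hm1, hm2⟩
          have : ((nstar:ℝ) - 1)/2 ≤ (nstar:ℝ) := by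
            have : (0:ℝ) ≤ (nstar:ℝ) := Nat.cast_nonneg _
            linarith
          linarith

end MainLemma

theorem td2_forces_induced_path {V : Type} [Fintype V] (G : SimpleGraph V)
    (k n : ℕ) (hk : 1 ≤ k) (hn : 1 ≤ n) (htd : td2 G ≤ k) (hpath : HasPathOn G n) :
    ∃ m : ℕ, (n : ℝ) ^ ((1 : ℝ) / ((k : ℝ) - 1)) / 2 ≤ (m : ℝ) ∧
      HasInducedPathOn G m := by
  obtain ⟨p, hpinj, hpadj⟩ := hpath
  rcases eq_or_lt_of_le hk with hk1 | hk2
  · refine ⟨1, ?_, hasInducedPathOn_one G (p ⟨0, by omega⟩)⟩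
    have h0 : ((1:ℝ)/((k:ℝ)-1)) = 0 := by
      rw [← hk1]
      norm_num
    rw [h0, Real.rpow_zero]
    norm_num
  · set pp : ℕ → V := fun i => if h : i < n then p ⟨i, h⟩ else p ⟨0, by omega⟩ with hpp
    apply main_lemma G (Finset.univ.card) Finset.univ le_rfl k n (by omega) hn htd pp
    · intro i _
      exact Finset.mem_univ _
    · intro i hi j hj h
      rw [hpp] at h
      simp only [dif_pos hi, dif_pos hj] at h
      have h2 := hpinj h
      exact congrArg Fin.val h2
    · intro i hi
      rw [hpp]
      simp only [dif_pos (by omega : i < n), dif_pos hi]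
      exact hpadj ⟨i, by omega⟩ hi
end
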